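/- Let g_1, …, g_u ∈ F_r^* have multiplicative orders n_1, …, n_u with gcd(n_i, n_j) = 1 for all i ≠ j, and set n = n_1 n_2 ⋯ n_u. For a_1, …, a_u ∈ F_r let c(a_1, …, a_u) ∈ F_q^n be the word with coordinates Tr_{r/q}(Σ_{i=1}^u a_i g_i^t) for t = 0, …, n − 1. Then the Hamming weight of c(a_1, …, a_u) equals (q−1)n/q − (1/q) Σ_{y ∈ F_q^*} Π_{i=1}^u ( Σ_{x ∈ ⟨g_i⟩} ψ(y a_i x) ), where ⟨g_i⟩ is the cyclic subgroup of F_r^* generated by g_i (equality holding after casting the weight into ℂ). -/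

import Mathlib

open Finset

/-- The canonical additive character `ψ(x) = e^{2πi·Tr_{F/F_p}(x)/p}` of a finite field `F`
of characteristic `p`. -/
noncomputable def psi (p : ℕ) (F : Type*) [Field F] [Fintype F] [Algebra (ZMod p) F]
    (x : F) : ℂ :=
  Complex.exp (2 * (Real.pi : ℂ) * Complex.I * ((Algebra.trace (ZMod p) F x).val : ℂ) / (p : ℂ))

open Finset

lemma addChar_map_sum {A M : Type*} [AddCommMonoid A] [CommMonoid M] (χ : AddChar A M)
    {ι : Type*} (s : Finset ι) (f : ι → A) :
    χ (∑ i ∈ s, f i) = ∏ i ∈ s, χ (f i) := by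
  classical
  induction s using Finset.induction_on with
  | empty => simp
  | insert _ _ hi ih => rw [Finset.sum_insert hi, Finset.prod_insert hi, AddChar.map_add_eq_mul, ih]

lemma crt_sum {u : ℕ} (n : Fin u → ℕ) (hpos : ∀ i, 0 < n i)
    (hcop : Pairwise (Function.onFun Nat.Coprime n)) (f : Fin u → ℕ → ℂ)
    (hper : ∀ i t, f i (t % n i) = f i t) :
    ∑ t : Fin (∏ i, n i), ∏ i, f i (t : ℕ)
      = ∏ i, ∑ t ∈ Finset.range (n i), f i t := by
  haveI : ∀ i, NeZero (n i) := fun i => ⟨(hpos i).ne'⟩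
  haveI hN : NeZero (∏ i, n i) := ⟨Finset.prod_ne_zero_iff.mpr fun i _ => (hpos i).ne'⟩
  rw [Finset.prod_univ_sum]
  have h1 : ∑ t : Fin (∏ i, n i), ∏ i, f i (t : ℕ)
      = ∑ z : ZMod (∏ i, n i), ∏ i, f i z.val := by
    refine (Fintype.sum_bijective
      (fun z : ZMod (∏ i, n i) => (⟨z.val, ZMod.val_lt z⟩ : Fin (∏ i, n i))) ?_ _ _
      (fun z => rfl)).symm
    refine (Fintype.bijective_iff_injective_and_card _).mpr ⟨?_, by simp [ZMod.card]⟩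
    intro x y h
    exact ZMod.val_injective _ (by simpa [Fin.mk.injEq] using h)
  rw [h1]
  have h2 : ∀ z : ZMod (∏ i, n i), ∏ i, f i z.val
      = ∏ i, f i (((ZMod.prodEquivPi n hcop) z i).val) := by
    intro z
    refine Finset.prod_congr rfl fun i _ => ?_
    have hz : (ZMod.prodEquivPi n hcop) z i = ((z.val : ℕ) : ZMod (n i)) := by
      conv_lhs => rw [← ZMod.natCast_zmod_val z]
      rw [map_natCast]
      rw [Pi.natCast_apply]
    rw [hz, ZMod.val_natCast, hper]
  simp_rw [h2]
  have h3 : ∑ z : ZMod (∏ i, n i), ∏ i, f i (((ZMod.prodEquivPi n hcop) z i).val)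
      = ∑ w : ∀ i, ZMod (n i), ∏ i, f i ((w i).val) :=
    Equiv.sum_comp (ZMod.prodEquivPi n hcop).toEquiv (fun w => ∏ i, f i ((w i).val))
  rw [h3]
  refine Finset.sum_nbij' (fun w i => (w i).val) (fun c i => ((c i : ℕ) : ZMod (n i)))
    ?_ ?_ ?_ ?_ ?_
  · intro w _
    simp only [Fintype.mem_piFinset, Finset.mem_range]
    exact fun i => ZMod.val_lt _
  · intro c _
    exact Finset.mem_univ _
  · intro w _
    funext i
    exact ZMod.natCast_zmod_val _
  · intro c hc
    funext i
    simp only [Fintype.mem_piFinset, Finset.mem_range] at hc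
    show ((c i : ℕ) : ZMod (n i)).val = c i
    rw [ZMod.val_natCast, Nat.mod_eq_of_lt (hc i)]
  · intro w _
    rfl


set_option maxHeartbeats 1000000 in
/-- the Hamming weight of the codeword `c(a₁, …, a_u)` equals
`(q-1)n/q - (1/q) Σ_{y ∈ F_q^*} Π_i (Σ_{x ∈ ⟨g_i⟩} ψ(y a_i x))`, where the cyclic group
`⟨g_i⟩` of order `n i` is enumerated as `{g_i ^ t : 0 ≤ t < n i}`. -/
theorem stmt1 (p s m u : ℕ) [Fact p.Prime] (hs : 0 < s) (hm : 0 < m)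
    (K F : Type*) [Field K] [Fintype K] [DecidableEq K] [Field F] [Fintype F]
    [Algebra (ZMod p) F] [Algebra K F]
    (hq : Fintype.card K = p ^ s) (hr : Fintype.card F = Fintype.card K ^ m)
    (g : Fin u → Fˣ) (n : Fin u → ℕ) (hord : ∀ i, orderOf (g i) = n i)
    (hcop : ∀ i j, i ≠ j → Nat.Coprime (n i) (n j))
    (a : Fin u → F) :
    (hammingNorm (fun t : Fin (∏ i, n i) =>
        Algebra.trace K F (∑ i, a i * (g i : F) ^ (t : ℕ))) : ℂ)
      = ((Fintype.card K : ℂ) - 1) * (∏ i, (n i : ℂ)) / (Fintype.card K : ℂ)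
        - (1 / (Fintype.card K : ℂ)) * ∑ y : Kˣ,
            ∏ i, ∑ t ∈ Finset.range (n i),
              psi p F (algebraMap K F (y : K) * (a i * (g i : F) ^ t)) := by
  classical
  have hp : p.Prime := Fact.out
  haveI : NeZero p := ⟨hp.ne_zero⟩
  haveI hKp : CharP K p := by
    obtain ⟨q', hc⟩ := CharP.exists K
    haveI := hc
    obtain ⟨nn, hq'p, hnn⟩ := FiniteField.card K q'
    have hdvd : q' ∣ p ^ s := by
      rw [← hq, hnn]; exact dvd_pow_self q' (by exact_mod_cast nn.2.ne')
    have hqp : q' = p := (Nat.prime_dvd_prime_iff_eq hq'p hp).mp (hq'p.dvd_of_dvd_pow hdvd)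
    rwa [hqp] at hc
  letI : Algebra (ZMod p) K := ZMod.algebra K p
  haveI : CharP F p := charP_of_injective_algebraMap (algebraMap (ZMod p) F).injective p
  haveI : IsScalarTower (ZMod p) K F := IsScalarTower.of_algebraMap_eq'
    (RingHom.ext_zmod _ _)
  -- characters
  set χ : AddChar F ℂ :=
    ZMod.stdAddChar.compAddMonoidHom (Algebra.trace (ZMod p) F).toAddMonoidHom with hχ
  set χK : AddChar K ℂ :=
    ZMod.stdAddChar.compAddMonoidHom (Algebra.trace (ZMod p) K).toAddMonoidHom with hχK
  have hψ : ∀ x : F, psi p F x = χ x := by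
    intro x
    rw [hχ]
    rw [AddChar.compAddMonoidHom_apply, ZMod.stdAddChar_apply, ZMod.toCircle_apply]
    rfl
  have key : ∀ (y : K) (z : F), χ (algebraMap K F y * z) = χK (y * Algebra.trace K F z) := by
    intro y z
    rw [hχ, hχK, AddChar.compAddMonoidHom_apply, AddChar.compAddMonoidHom_apply]
    show ZMod.stdAddChar (Algebra.trace (ZMod p) F (algebraMap K F y * z))
      = ZMod.stdAddChar (Algebra.trace (ZMod p) K (y * Algebra.trace K F z))
    congr 1
    rw [← Algebra.trace_trace (R := ZMod p) (S := K) (T := F)]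
    congr 1
    rw [← Algebra.smul_def, map_smul, smul_eq_mul]
  have hprim : χK.IsPrimitive := by
    apply AddChar.IsPrimitive.of_ne_one
    obtain ⟨b, hb⟩ : ∃ b : K, Algebra.trace (ZMod p) K b ≠ 0 := by
      haveI : Algebra.IsAlgebraic (ZMod p) K := Algebra.IsAlgebraic.of_finite _ _
      by_contra! hf
      exact Algebra.trace_ne_zero (ZMod p) K (LinearMap.ext hf)
    intro h1
    apply hb
    have hb1 : χK b = 1 := by rw [h1]; rfl
    rw [hχK, AddChar.compAddMonoidHom_apply] at hb1
    have h2 : ZMod.stdAddChar (Algebra.trace (ZMod p) K b)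
        = ZMod.stdAddChar (0 : ZMod p) := by
      rw [AddChar.map_zero_eq_one]; exact hb1
    exact ZMod.injective_stdAddChar (N := p) h2
  have orth : ∀ z : F, ∑ y : K, χ (algebraMap K F y * z)
      = if Algebra.trace K F z = 0 then (Fintype.card K : ℂ) else 0 := by
    intro z
    simp_rw [key]
    rw [AddChar.sum_mulShift _ hprim]
    split_ifs <;> simp
  -- counting
  have npos : ∀ i, 0 < n i := fun i => (hord i) ▸ orderOf_pos (g i)
  have hWZ : hammingNorm (fun t : Fin (∏ i, n i) =>
        Algebra.trace K F (∑ i, a i * (g i : F) ^ (t : ℕ)))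
      + (Finset.univ.filter fun t : Fin (∏ i, n i) =>
          Algebra.trace K F (∑ i, a i * (g i : F) ^ (t : ℕ)) = 0).card = ∏ i, n i := by
    rw [hammingNorm]
    have h := Finset.card_filter_add_card_filter_not
      (s := (Finset.univ : Finset (Fin (∏ i, n i))))
      (p := fun t => Algebra.trace K F (∑ i, a i * (g i : F) ^ (t : ℕ)) ≠ 0)
    simp only [not_not] at h
    rw [show ({t : Fin (∏ i, n i) |
        Algebra.trace K F (∑ i, a i * (g i : F) ^ (t : ℕ)) ≠ 0} : Finset (Fin (∏ i, n i)))
      = Finset.univ.filter (fun t : Fin (∏ i, n i) =>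
          Algebra.trace K F (∑ i, a i * (g i : F) ^ (t : ℕ)) ≠ 0) from rfl]
    rw [h, Finset.card_univ, Fintype.card_fin]
  have hq0 : (Fintype.card K : ℂ) ≠ 0 := Nat.cast_ne_zero.mpr Fintype.card_ne_zero
  have step1 : ∀ (y : K) (t : ℕ), χ (algebraMap K F y * ∑ i, a i * (g i : F) ^ t)
      = ∏ i, χ (algebraMap K F y * (a i * (g i : F) ^ t)) := by
    intro y t
    rw [Finset.mul_sum]
    exact addChar_map_sum χ _ _
  have step2 : ∀ y : K,
      ∑ t : Fin (∏ i, n i), χ (algebraMap K F y * ∑ i, a i * (g i : F) ^ (t : ℕ))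
      = ∏ i, ∑ t ∈ Finset.range (n i), χ (algebraMap K F y * (a i * (g i : F) ^ t)) := by
    intro y
    simp_rw [step1]
    refine crt_sum n npos (fun i j h => hcop i j h)
      (fun i t => χ (algebraMap K F y * (a i * (g i : F) ^ t))) (fun i t => ?_)
    have hgp : (g i : F) ^ (t % n i) = (g i : F) ^ t := by
      rw [← hord i, ← orderOf_units, pow_mod_orderOf]
    show χ (algebraMap K F y * (a i * (g i : F) ^ (t % n i)))
      = χ (algebraMap K F y * (a i * (g i : F) ^ t))
    rw [hgp]
  have hunits : ∀ T : K → ℂ,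
      ∑ y ∈ (Finset.univ : Finset K).erase 0, T y = ∑ y : Kˣ, T (y : K) := by
    intro T
    refine Finset.sum_nbij' (fun y => if h : y = (0 : K) then 1 else Units.mk0 y h)
      (fun y : Kˣ => (y : K)) (fun y hy => Finset.mem_univ _)
      (fun y _ => Finset.mem_erase.mpr ⟨y.ne_zero, Finset.mem_univ _⟩)
      (fun y hy => ?_) (fun y _ => ?_) (fun y hy => ?_)
    · simp only [dif_neg (Finset.mem_erase.mp hy).1]
      rfl
    · simp only [dif_neg y.ne_zero]
      exact Units.ext rfl
    · simp only [dif_neg (Finset.mem_erase.mp hy).1]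
      rfl
  have hZmain : (Fintype.card K : ℂ) * ((Finset.univ.filter fun t : Fin (∏ i, n i) =>
          Algebra.trace K F (∑ i, a i * (g i : F) ^ (t : ℕ)) = 0).card : ℂ)
      = ((∏ i, n i : ℕ) : ℂ) + ∑ y : Kˣ, ∏ i, ∑ t ∈ Finset.range (n i),
          χ (algebraMap K F (y : K) * (a i * (g i : F) ^ t)) := by
    have e1 : (Fintype.card K : ℂ) * ((Finset.univ.filter fun t : Fin (∏ i, n i) =>
            Algebra.trace K F (∑ i, a i * (g i : F) ^ (t : ℕ)) = 0).card : ℂ)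
        = ∑ t : Fin (∏ i, n i), ∑ y : K,
            χ (algebraMap K F y * ∑ i, a i * (g i : F) ^ (t : ℕ)) := by
      simp_rw [orth]
      rw [Finset.sum_ite, Finset.sum_const, Finset.sum_const, smul_zero, add_zero,
        nsmul_eq_mul, mul_comm]
    rw [e1, Finset.sum_comm]
    simp_rw [step2]
    rw [← Finset.add_sum_erase _ _ (Finset.mem_univ (0 : K)),
      hunits (fun y => ∏ i, ∑ t ∈ Finset.range (n i),
        χ (algebraMap K F y * (a i * (g i : F) ^ t)))]
    congr 1
    simp only [map_zero, zero_mul, AddChar.map_zero_eq_one, Finset.sum_const,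
      Finset.card_range, nsmul_eq_mul, mul_one]
    push_cast
    rfl
  have hWc : (hammingNorm (fun t : Fin (∏ i, n i) =>
        Algebra.trace K F (∑ i, a i * (g i : F) ^ (t : ℕ))) : ℂ)
      = ((∏ i, n i : ℕ) : ℂ) - ((Finset.univ.filter fun t : Fin (∏ i, n i) =>
          Algebra.trace K F (∑ i, a i * (g i : F) ^ (t : ℕ)) = 0).card : ℂ) := by
    have h := congrArg (Nat.cast : ℕ → ℂ) hWZ
    push_cast at h ⊢
    linear_combination h
  have hNc : (∏ i, (n i : ℂ)) = ((∏ i, n i : ℕ) : ℂ) := by push_cast; rfl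
  have final : ∀ (q Nc Zc S : ℂ), q ≠ 0 → q * Zc = Nc + S →
      Nc - Zc = (q - 1) * Nc / q - 1 / q * S := by
    intro q Nc Zc S h0 h
    field_simp
    linear_combination -h
  simp_rw [hψ]
  rw [hWc, hNc]
  exact final _ _ _ _ hq0 hZmain
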